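/- Let f̂ : ℝ → ℝ be bounded Lipschitz and s > 0. The map T on C²([0,1]) defined by (Tρ)(y) = ∫₀¹ s² G(ξ, y) f̂(ρ(ξ)) dξ + 𝔠 y (with G the Green kernel of the interval) is Lipschitz with ‖Tρ - Tϱ‖_{C²[0,1]} ≤ (13 s² Lip(f̂)/8) ‖ρ - ϱ‖_{C²[0,1]}. -/

import Mathlib

open Set intervalIntegral
open MeasureTheory

lemma aux_left {f : ℝ → ℝ} {a c : ℝ} (h : ∀ x ≤ a, f x = c) : deriv f a = 0 := by
  by_cases H : DifferentiableAt ℝ f a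
  · have h1 : HasDerivWithinAt f (deriv f a) (Iic a) a := H.hasDerivAt.hasDerivWithinAt
    have h2 : HasDerivWithinAt f 0 (Iic a) a :=
      (hasDerivWithinAt_const a (Iic a) c).congr (fun x hx => h x hx) (h a le_rfl)
    exact (uniqueDiffOn_Iic a a self_mem_Iic).eq_deriv _ h1 h2
  · exact deriv_zero_of_not_differentiableAt H

lemma aux_right {f : ℝ → ℝ} {a c : ℝ} (h : ∀ x, a ≤ x → f x = c) : deriv f a = 0 := by
  by_cases H : DifferentiableAt ℝ f a
  · have h1 : HasDerivWithinAt f (deriv f a) (Ici a) a := H.hasDerivAt.hasDerivWithinAt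
    have h2 : HasDerivWithinAt f 0 (Ici a) a :=
      (hasDerivWithinAt_const a (Ici a) c).congr (fun x hx => h x hx) (h a le_rfl)
    exact (uniqueDiffOn_Ici a a self_mem_Ici).eq_deriv _ h1 h2
  · exact deriv_zero_of_not_differentiableAt H

lemma ker_eq_max (y ξ : ℝ) :
    (if ξ ≤ y then ξ * (y - 1) else y * (ξ - 1)) = max (ξ * (y - 1)) (y * (ξ - 1)) := by
  split_ifs with h
  · rw [max_eq_left]; nlinarith
  · rw [max_eq_right]; nlinarith [le_of_not_ge h]

lemma ker_cont (y : ℝ) : Continuous fun ξ : ℝ => if ξ ≤ y then ξ * (y - 1) else y * (ξ - 1) := by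
  simp only [ker_eq_max]
  exact Continuous.max (by continuity) (by continuity)

noncomputable def Phi (s 𝔠 : ℝ) (h : ℝ → ℝ) (y : ℝ) : ℝ :=
  s ^ 2 * ((∫ ξ in (0:ℝ)..y, ξ * h ξ) + ∫ ξ in y..(1:ℝ), (ξ - 1) * h ξ) + 𝔠

lemma int_f1 {h : ℝ → ℝ} (hc : ContinuousOn h (Icc 0 1)) {a b : ℝ}
    (ha : a ∈ Icc (0:ℝ) 1) (hb : b ∈ Icc (0:ℝ) 1) :
    IntervalIntegrable (fun ξ => ξ * h ξ) volume a b :=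
  (continuousOn_id.mul (hc.mono (uIcc_subset_Icc ha hb))).intervalIntegrable

lemma int_f2 {h : ℝ → ℝ} (hc : ContinuousOn h (Icc 0 1)) {a b : ℝ}
    (ha : a ∈ Icc (0:ℝ) 1) (hb : b ∈ Icc (0:ℝ) 1) :
    IntervalIntegrable (fun ξ => (ξ - 1) * h ξ) volume a b :=
  (((continuous_id.sub continuous_const).continuousOn).mul
    (hc.mono (uIcc_subset_Icc ha hb))).intervalIntegrable

lemma int_ker (s y : ℝ) {h : ℝ → ℝ} (hc : ContinuousOn h (Icc 0 1)) {a b : ℝ}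
    (ha : a ∈ Icc (0:ℝ) 1) (hb : b ∈ Icc (0:ℝ) 1) :
    IntervalIntegrable
      (fun ξ => s ^ 2 * (if ξ ≤ y then ξ * (y - 1) else y * (ξ - 1)) * h ξ) volume a b :=
  (((continuous_const.mul (ker_cont y)).continuousOn).mul
    (hc.mono (uIcc_subset_Icc ha hb))).intervalIntegrable

lemma T_split (s 𝔠 : ℝ) {h T : ℝ → ℝ} (hc : ContinuousOn h (Icc 0 1))
    (hT : ∀ y, T y = (∫ ξ in (0:ℝ)..1,
      s ^ 2 * (if ξ ≤ y then ξ * (y - 1) else y * (ξ - 1)) * h ξ) + 𝔠 * y)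
    {y : ℝ} (hy : y ∈ Icc (0:ℝ) 1) :
    T y = s ^ 2 * ((y - 1) * ∫ ξ in (0:ℝ)..y, ξ * h ξ)
        + s ^ 2 * (y * ∫ ξ in y..(1:ℝ), (ξ - 1) * h ξ) + 𝔠 * y := by
  rw [hT y,
    ← integral_add_adjacent_intervals (int_ker s y hc (left_mem_Icc.2 zero_le_one) hy)
      (int_ker s y hc hy (right_mem_Icc.2 zero_le_one))]
  have e1 : (∫ ξ in (0:ℝ)..y, s ^ 2 * (if ξ ≤ y then ξ * (y - 1) else y * (ξ - 1)) * h ξ)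
      = s ^ 2 * ((y - 1) * ∫ ξ in (0:ℝ)..y, ξ * h ξ) := by
    rw [show s ^ 2 * ((y - 1) * ∫ ξ in (0:ℝ)..y, ξ * h ξ)
        = ∫ ξ in (0:ℝ)..y, s ^ 2 * (y - 1) * (ξ * h ξ) by
      rw [intervalIntegral.integral_const_mul]; ring]
    apply intervalIntegral.integral_congr
    intro ξ hξ
    rw [uIcc_of_le hy.1] at hξ
    show (s ^ 2 * if ξ ≤ y then ξ * (y - 1) else y * (ξ - 1)) * h ξ = _
    rw [if_pos hξ.2]; ring
  have e2 : (∫ ξ in y..(1:ℝ), s ^ 2 * (if ξ ≤ y then ξ * (y - 1) else y * (ξ - 1)) * h ξ)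
      = s ^ 2 * (y * ∫ ξ in y..(1:ℝ), (ξ - 1) * h ξ) := by
    rw [show s ^ 2 * (y * ∫ ξ in y..(1:ℝ), (ξ - 1) * h ξ)
        = ∫ ξ in y..(1:ℝ), s ^ 2 * y * ((ξ - 1) * h ξ) by
      rw [intervalIntegral.integral_const_mul]; ring]
    apply intervalIntegral.integral_congr
    intro ξ hξ
    rw [uIcc_of_le hy.2] at hξ
    show (s ^ 2 * if ξ ≤ y then ξ * (y - 1) else y * (ξ - 1)) * h ξ = _
    by_cases hle : ξ ≤ y
    · have hxy : ξ = y := le_antisymm hle hξ.1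
      subst hxy; rw [if_pos le_rfl]; ring
    · rw [if_neg hle]; ring
  rw [e1, e2]

lemma T_hasDerivWithinAt (s 𝔠 : ℝ) {h T : ℝ → ℝ} (hc : ContinuousOn h (Icc 0 1))
    (hT : ∀ y, T y = (∫ ξ in (0:ℝ)..1,
      s ^ 2 * (if ξ ≤ y then ξ * (y - 1) else y * (ξ - 1)) * h ξ) + 𝔠 * y)
    {y : ℝ} (hy : y ∈ Icc (0:ℝ) 1) :
    HasDerivWithinAt T (Phi s 𝔠 h y) (Icc 0 1) y := by
  haveI : Fact (y ∈ Icc (0:ℝ) 1) := ⟨hy⟩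
  have hc1 : ContinuousOn (fun ξ => ξ * h ξ) (Icc 0 1) := continuousOn_id.mul hc
  have hc2 : ContinuousOn (fun ξ => (ξ - 1) * h ξ) (Icc 0 1) :=
    ((continuous_id.sub continuous_const).continuousOn).mul hc
  have hA : HasDerivWithinAt (fun u => ∫ ξ in (0:ℝ)..u, ξ * h ξ) (y * h y) (Icc 0 1) y :=
    integral_hasDerivWithinAt_right (int_f1 hc (left_mem_Icc.2 zero_le_one) hy)
      (hc1.stronglyMeasurableAtFilter_nhdsWithin measurableSet_Icc y) (hc1 y hy)
  have hB : HasDerivWithinAt (fun u => ∫ ξ in u..(1:ℝ), (ξ - 1) * h ξ)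
      (-((y - 1) * h y)) (Icc 0 1) y :=
    integral_hasDerivWithinAt_left (int_f2 hc hy (right_mem_Icc.2 zero_le_one))
      (hc2.stronglyMeasurableAtFilter_nhdsWithin measurableSet_Icc y) (hc2 y hy)
  have hid : HasDerivWithinAt (fun u : ℝ => u) 1 (Icc (0:ℝ) 1) y :=
    (hasDerivAt_id y).hasDerivWithinAt
  have main : HasDerivWithinAt
      (fun u => s ^ 2 * ((u - 1) * ∫ ξ in (0:ℝ)..u, ξ * h ξ)
        + s ^ 2 * (u * ∫ ξ in u..(1:ℝ), (ξ - 1) * h ξ) + 𝔠 * u)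
      (Phi s 𝔠 h y) (Icc 0 1) y := by
    have h1 := (((hid.sub_const 1).mul hA).const_mul (s ^ 2))
    have h2 := ((hid.mul hB).const_mul (s ^ 2))
    have h3 := (hid.const_mul 𝔠)
    exact ((h1.add h2).add h3).congr_deriv (by simp only [Phi]; ring)
  exact main.congr (fun x hx => T_split s 𝔠 hc hT hx) (T_split s 𝔠 hc hT hy)

lemma T_left (s 𝔠 : ℝ) {h T : ℝ → ℝ}
    (hT : ∀ y, T y = (∫ ξ in (0:ℝ)..1,
      s ^ 2 * (if ξ ≤ y then ξ * (y - 1) else y * (ξ - 1)) * h ξ) + 𝔠 * y)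
    {x : ℝ} (hx : x ≤ 0) : T x = x * Phi s 𝔠 h 0 := by
  rw [hT x]
  have e : (∫ ξ in (0:ℝ)..1, s ^ 2 * (if ξ ≤ x then ξ * (x - 1) else x * (ξ - 1)) * h ξ)
      = ∫ ξ in (0:ℝ)..1, x * (s ^ 2 * ((ξ - 1) * h ξ)) := by
    apply intervalIntegral.integral_congr
    intro ξ hξ
    rw [uIcc_of_le zero_le_one] at hξ
    show (s ^ 2 * if ξ ≤ x then ξ * (x - 1) else x * (ξ - 1)) * h ξ = _
    by_cases hif : ξ ≤ x
    · have hx0 : x = 0 := le_antisymm hx (hξ.1.trans hif)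
      have hξ0 : ξ = 0 := le_antisymm (hif.trans hx) hξ.1
      subst hx0; subst hξ0; simp
    · rw [if_neg hif]; ring
  rw [e, intervalIntegral.integral_const_mul, intervalIntegral.integral_const_mul]
  simp only [Phi, intervalIntegral.integral_same, zero_add]
  ring

lemma T_right (s 𝔠 : ℝ) {h T : ℝ → ℝ}
    (hT : ∀ y, T y = (∫ ξ in (0:ℝ)..1,
      s ^ 2 * (if ξ ≤ y then ξ * (y - 1) else y * (ξ - 1)) * h ξ) + 𝔠 * y)
    {x : ℝ} (hx : 1 ≤ x) :
    T x = x * Phi s 𝔠 h 1 - s ^ 2 * ∫ ξ in (0:ℝ)..1, ξ * h ξ := by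
  rw [hT x]
  have e : (∫ ξ in (0:ℝ)..1, s ^ 2 * (if ξ ≤ x then ξ * (x - 1) else x * (ξ - 1)) * h ξ)
      = ∫ ξ in (0:ℝ)..1, (x - 1) * (s ^ 2 * (ξ * h ξ)) := by
    apply intervalIntegral.integral_congr
    intro ξ hξ
    rw [uIcc_of_le zero_le_one] at hξ
    show (s ^ 2 * if ξ ≤ x then ξ * (x - 1) else x * (ξ - 1)) * h ξ = _
    rw [if_pos (hξ.2.trans hx)]; ring
  rw [e, intervalIntegral.integral_const_mul, intervalIntegral.integral_const_mul]
  simp only [Phi, intervalIntegral.integral_same, add_zero]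
  ring

lemma T_hasDerivAt (s 𝔠 : ℝ) {h T : ℝ → ℝ} (hc : ContinuousOn h (Icc 0 1))
    (hT : ∀ y, T y = (∫ ξ in (0:ℝ)..1,
      s ^ 2 * (if ξ ≤ y then ξ * (y - 1) else y * (ξ - 1)) * h ξ) + 𝔠 * y)
    {y : ℝ} (hy : y ∈ Icc (0:ℝ) 1) : HasDerivAt T (Phi s 𝔠 h y) y := by
  rcases lt_or_eq_of_le hy.1 with h0 | h0
  · rcases lt_or_eq_of_le hy.2 with h1 | h1
    · exact (T_hasDerivWithinAt s 𝔠 hc hT hy).hasDerivAt (Icc_mem_nhds h0 h1)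
    · -- y = 1
      subst h1
      have hIci : HasDerivWithinAt T (Phi s 𝔠 h 1) (Ici (1:ℝ)) 1 := by
        have hl : HasDerivAt (fun x : ℝ => x * Phi s 𝔠 h 1 - s ^ 2 * ∫ ξ in (0:ℝ)..1, ξ * h ξ)
            (Phi s 𝔠 h 1) 1 := by
          simpa using ((hasDerivAt_id (1:ℝ)).mul_const (Phi s 𝔠 h 1)).sub_const
            (s ^ 2 * ∫ ξ in (0:ℝ)..1, ξ * h ξ)
        exact hl.hasDerivWithinAt.congr (fun x hx => T_right s 𝔠 hT hx)
          (T_right s 𝔠 hT le_rfl)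
      have hIic : HasDerivWithinAt T (Phi s 𝔠 h 1) (Iic (1:ℝ)) 1 :=
        (T_hasDerivWithinAt s 𝔠 hc hT hy).mono_of_mem_nhdsWithin
          (Icc_mem_nhdsLE zero_lt_one)
      have := hIic.union hIci
      rwa [Iic_union_Ici, hasDerivWithinAt_univ] at this
  · -- y = 0
    subst h0
    have hIic : HasDerivWithinAt T (Phi s 𝔠 h 0) (Iic (0:ℝ)) 0 := by
      have hl : HasDerivAt (fun x : ℝ => x * Phi s 𝔠 h 0) (Phi s 𝔠 h 0) 0 := by
        simpa using (hasDerivAt_id (0:ℝ)).mul_const (Phi s 𝔠 h 0)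
      exact hl.hasDerivWithinAt.congr (fun x hx => T_left s 𝔠 hT hx) (T_left s 𝔠 hT le_rfl)
    have hIci : HasDerivWithinAt T (Phi s 𝔠 h 0) (Ici (0:ℝ)) 0 :=
      (T_hasDerivWithinAt s 𝔠 hc hT hy).mono_of_mem_nhdsWithin
        (Icc_mem_nhdsGE zero_lt_one)
    have := hIic.union hIci
    rwa [Iic_union_Ici, hasDerivWithinAt_univ] at this

lemma Phi_hasDerivAt (s 𝔠 : ℝ) {h : ℝ → ℝ} (hca : ∀ x ∈ Icc (0:ℝ) 1, ContinuousAt h x)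
    {y : ℝ} (hy : y ∈ Ioo (0:ℝ) 1) :
    HasDerivAt (Phi s 𝔠 h) (s ^ 2 * h y) y := by
  have hc : ContinuousOn h (Icc 0 1) := fun x hx => (hca x hx).continuousWithinAt
  have hyI : y ∈ Icc (0:ℝ) 1 := Ioo_subset_Icc_self hy
  have hca1 : ∀ x ∈ Ioo (0:ℝ) 1, ContinuousAt (fun ξ => ξ * h ξ) x :=
    fun x hx => continuousAt_id.mul (hca x (Ioo_subset_Icc_self hx))
  have hca2 : ∀ x ∈ Ioo (0:ℝ) 1, ContinuousAt (fun ξ => (ξ - 1) * h ξ) x :=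
    fun x hx => ((continuous_id.sub continuous_const).continuousAt).mul
      (hca x (Ioo_subset_Icc_self hx))
  have hA : HasDerivAt (fun u => ∫ ξ in (0:ℝ)..u, ξ * h ξ) (y * h y) y :=
    intervalIntegral.integral_hasDerivAt_right
      (int_f1 hc (left_mem_Icc.2 zero_le_one) hyI)
      (ContinuousAt.stronglyMeasurableAtFilter isOpen_Ioo hca1 y hy)
      (hca1 y hy)
  have hB : HasDerivAt (fun u => ∫ ξ in u..(1:ℝ), (ξ - 1) * h ξ) (-((y - 1) * h y)) y :=
    intervalIntegral.integral_hasDerivAt_left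
      (int_f2 hc hyI (right_mem_Icc.2 zero_le_one))
      (ContinuousAt.stronglyMeasurableAtFilter isOpen_Ioo hca2 y hy)
      (hca2 y hy)
  have main := ((hA.add hB).const_mul (s ^ 2)).add_const 𝔠
  exact main.congr_deriv (by ring)

lemma T_deriv2_interior (s 𝔠 : ℝ) {h T : ℝ → ℝ} (hca : ∀ x ∈ Icc (0:ℝ) 1, ContinuousAt h x)
    (hT : ∀ y, T y = (∫ ξ in (0:ℝ)..1,
      s ^ 2 * (if ξ ≤ y then ξ * (y - 1) else y * (ξ - 1)) * h ξ) + 𝔠 * y)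
    {y : ℝ} (hy : y ∈ Ioo (0:ℝ) 1) :
    deriv (deriv T) y = s ^ 2 * h y := by
  have hc : ContinuousOn h (Icc 0 1) := fun x hx => (hca x hx).continuousWithinAt
  have hev : deriv T =ᶠ[nhds y] Phi s 𝔠 h :=
    Filter.eventuallyEq_of_mem (isOpen_Ioo.mem_nhds hy)
      (fun z hz => (T_hasDerivAt s 𝔠 hc hT (Ioo_subset_Icc_self hz)).deriv)
  rw [hev.deriv_eq, (Phi_hasDerivAt s 𝔠 hca hy).deriv]

lemma T_deriv2_zero (s 𝔠 : ℝ) {h T : ℝ → ℝ} (hc : ContinuousOn h (Icc 0 1))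
    (hT : ∀ y, T y = (∫ ξ in (0:ℝ)..1,
      s ^ 2 * (if ξ ≤ y then ξ * (y - 1) else y * (ξ - 1)) * h ξ) + 𝔠 * y) :
    deriv (deriv T) 0 = 0 := by
  apply aux_left (c := Phi s 𝔠 h 0)
  intro x hx
  rcases eq_or_lt_of_le hx with h0 | h0
  · subst h0
    exact (T_hasDerivAt s 𝔠 hc hT (left_mem_Icc.2 zero_le_one)).deriv
  · have hev : T =ᶠ[nhds x] fun z => z * Phi s 𝔠 h 0 :=
      Filter.eventuallyEq_of_mem (isOpen_Iio.mem_nhds h0)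
        (fun z hz => T_left s 𝔠 hT (le_of_lt hz))
    rw [hev.deriv_eq]
    simpa using ((hasDerivAt_id x).mul_const (Phi s 𝔠 h 0)).deriv

lemma T_deriv2_one (s 𝔠 : ℝ) {h T : ℝ → ℝ} (hc : ContinuousOn h (Icc 0 1))
    (hT : ∀ y, T y = (∫ ξ in (0:ℝ)..1,
      s ^ 2 * (if ξ ≤ y then ξ * (y - 1) else y * (ξ - 1)) * h ξ) + 𝔠 * y) :
    deriv (deriv T) 1 = 0 := by
  apply aux_right (c := Phi s 𝔠 h 1)
  intro x hx
  rcases eq_or_lt_of_le hx with h0 | h0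
  · rw [← h0]
    exact (T_hasDerivAt s 𝔠 hc hT (right_mem_Icc.2 zero_le_one)).deriv
  · have hev : T =ᶠ[nhds x]
        fun z => z * Phi s 𝔠 h 1 - s ^ 2 * ∫ ξ in (0:ℝ)..1, ξ * h ξ :=
      Filter.eventuallyEq_of_mem (isOpen_Ioi.mem_nhds h0)
        (fun z hz => T_right s 𝔠 hT (le_of_lt hz))
    rw [hev.deriv_eq]
    simpa using (((hasDerivAt_id x).mul_const (Phi s 𝔠 h 1)).sub_const
      (s ^ 2 * ∫ ξ in (0:ℝ)..1, ξ * h ξ)).deriv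

lemma norm_int_le {f g : ℝ → ℝ} {a b : ℝ} (hab : a ≤ b)
    (hfg : ∀ t, a < t → t ≤ b → |f t| ≤ g t) (hg : IntervalIntegrable g volume a b) :
    |∫ t in a..b, f t| ≤ |∫ t in a..b, g t| := by
  rw [← Real.norm_eq_abs (∫ t in a..b, f t)]
  apply intervalIntegral.norm_integral_le_abs_of_norm_le ?_ hg
  refine (MeasureTheory.ae_restrict_mem measurableSet_uIoc).mono ?_
  intro t ht
  rw [uIoc_of_le hab] at ht
  rw [Real.norm_eq_abs]
  exact hfg t ht.1 ht.2

/-- The fixed-point map `T` defined via the Green kernel of the interval,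
`(Tρ)(y) = ∫₀¹ s² G(ξ,y) f̂(ρ(ξ)) dξ + 𝔠 y`, is Lipschitz on `C²([0,1])` with
constant `13 s² Lip(f̂) / 8`. -/
theorem stmt_6 (𝔠 s : ℝ) (hs : 0 < s) (fhat : ℝ → ℝ) (K : ℝ) (hK : 0 ≤ K)
    (hlip : ∀ t t' : ℝ, |fhat t - fhat t'| ≤ K * |t - t'|)
    (hbdd : ∃ M : ℝ, ∀ t : ℝ, |fhat t| ≤ M)
    (G : ℝ → ℝ → ℝ)
    (hG : ∀ ξ y : ℝ, G ξ y = if ξ ≤ y then ξ * (y - 1) else y * (ξ - 1))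
    (T : (ℝ → ℝ) → (ℝ → ℝ))
    (hT : ∀ (ρ : ℝ → ℝ) (y : ℝ),
      T ρ y = (∫ ξ in (0:ℝ)..1, s ^ 2 * G ξ y * fhat (ρ ξ)) + 𝔠 * y)
    (ρ ϱ ρ' ρ'' ϱ' ϱ'' : ℝ → ℝ)
    (hρ1 : ∀ y ∈ Set.Icc (0:ℝ) 1, HasDerivAt ρ (ρ' y) y)
    (hρ2 : ∀ y ∈ Set.Icc (0:ℝ) 1, HasDerivAt ρ' (ρ'' y) y)
    (hρc : ContinuousOn ρ'' (Set.Icc 0 1))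
    (hϱ1 : ∀ y ∈ Set.Icc (0:ℝ) 1, HasDerivAt ϱ (ϱ' y) y)
    (hϱ2 : ∀ y ∈ Set.Icc (0:ℝ) 1, HasDerivAt ϱ' (ϱ'' y) y)
    (hϱc : ContinuousOn ϱ'' (Set.Icc 0 1))
    (N : ℝ)
    (hN : ∀ y ∈ Set.Icc (0:ℝ) 1,
      |ρ y - ϱ y| + |ρ' y - ϱ' y| + |ρ'' y - ϱ'' y| ≤ N) :
    ∀ y ∈ Set.Icc (0:ℝ) 1,
      |T ρ y - T ϱ y| + |deriv (T ρ) y - deriv (T ϱ) y|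
        + |deriv (deriv (T ρ)) y - deriv (deriv (T ϱ)) y|
      ≤ 13 * s ^ 2 * K / 8 * N := by
  -- continuity of fhat
  have hfc : Continuous fhat := by
    have : LipschitzWith (Real.toNNReal K) fhat := by
      apply LipschitzWith.of_dist_le_mul
      intro t t'
      rw [Real.dist_eq, Real.dist_eq, Real.coe_toNNReal K hK]
      exact hlip t t'
    exact this.continuous
  set f : ℝ → ℝ := fun ξ => fhat (ρ ξ) with hf
  set g : ℝ → ℝ := fun ξ => fhat (ϱ ξ) with hg
  have hcaρ : ∀ x ∈ Icc (0:ℝ) 1, ContinuousAt f x :=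
    fun x hx => hfc.continuousAt.comp (hρ1 x hx).differentiableAt.continuousAt
  have hcaϱ : ∀ x ∈ Icc (0:ℝ) 1, ContinuousAt g x :=
    fun x hx => hfc.continuousAt.comp (hϱ1 x hx).differentiableAt.continuousAt
  have hcρ : ContinuousOn f (Icc 0 1) := fun x hx => (hcaρ x hx).continuousWithinAt
  have hcϱ : ContinuousOn g (Icc 0 1) := fun x hx => (hcaϱ x hx).continuousWithinAt
  have hTρ : ∀ y, T ρ y = (∫ ξ in (0:ℝ)..1,
      s ^ 2 * (if ξ ≤ y then ξ * (y - 1) else y * (ξ - 1)) * f ξ) + 𝔠 * y := by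
    intro y; simp only [hT, hG, hf]
  have hTϱ : ∀ y, T ϱ y = (∫ ξ in (0:ℝ)..1,
      s ^ 2 * (if ξ ≤ y then ξ * (y - 1) else y * (ξ - 1)) * g ξ) + 𝔠 * y := by
    intro y; simp only [hT, hG, hg]
  have hNnn : 0 ≤ N := le_trans (by positivity) (hN 0 ⟨le_rfl, zero_le_one⟩)
  have hpt : ∀ ξ ∈ Icc (0:ℝ) 1, |f ξ - g ξ| ≤ K * N := by
    intro ξ hξ
    refine (hlip _ _).trans ?_
    have h1 := hN ξ hξ
    have h2 := abs_nonneg (ρ' ξ - ϱ' ξ)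
    have h3 := abs_nonneg (ρ'' ξ - ϱ'' ξ)
    nlinarith [abs_nonneg (ρ ξ - ϱ ξ)]
  intro y hy
  have hy0 : (0:ℝ) ≤ y := hy.1
  have hy1 : y ≤ 1 := hy.2
  have hsKN : 0 ≤ s ^ 2 * (K * N) := by positivity
  -- ** Term 1 **
  have ht1 : |T ρ y - T ϱ y| ≤ s ^ 2 * (K * N) / 8 := by
    rw [hTρ y, hTϱ y]
    have hcancel : ((∫ ξ in (0:ℝ)..1,
          s ^ 2 * (if ξ ≤ y then ξ * (y - 1) else y * (ξ - 1)) * f ξ) + 𝔠 * y)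
        - ((∫ ξ in (0:ℝ)..1,
          s ^ 2 * (if ξ ≤ y then ξ * (y - 1) else y * (ξ - 1)) * g ξ) + 𝔠 * y)
        = (∫ ξ in (0:ℝ)..1,
            (s ^ 2 * (if ξ ≤ y then ξ * (y - 1) else y * (ξ - 1)) * f ξ
              - s ^ 2 * (if ξ ≤ y then ξ * (y - 1) else y * (ξ - 1)) * g ξ)) := by
      rw [intervalIntegral.integral_sub
        (int_ker s y hcρ (left_mem_Icc.2 zero_le_one) (right_mem_Icc.2 zero_le_one))
        (int_ker s y hcϱ (left_mem_Icc.2 zero_le_one) (right_mem_Icc.2 zero_le_one))]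
      ring
    rw [hcancel, ← intervalIntegral.integral_add_adjacent_intervals (b := y)
      ((int_ker s y hcρ (left_mem_Icc.2 zero_le_one) hy).sub
        (int_ker s y hcϱ (left_mem_Icc.2 zero_le_one) hy))
      ((int_ker s y hcρ hy (right_mem_Icc.2 zero_le_one)).sub
        (int_ker s y hcϱ hy (right_mem_Icc.2 zero_le_one)))]
    have hb1 : |∫ ξ in (0:ℝ)..y,
        (s ^ 2 * (if ξ ≤ y then ξ * (y - 1) else y * (ξ - 1)) * f ξ
          - s ^ 2 * (if ξ ≤ y then ξ * (y - 1) else y * (ξ - 1)) * g ξ)|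
        ≤ s ^ 2 * (K * N) * (1 - y) * (y ^ 2 / 2) := by
      refine (norm_int_le (g := fun t => s ^ 2 * (K * N) * (1 - y) * t) hy0 ?_ ?_).trans
        (le_of_eq ?_)
      · intro t ht0 hty
        have htI : t ∈ Icc (0:ℝ) 1 := ⟨ht0.le, hty.trans hy1⟩
        rw [if_pos hty]
        have e : s ^ 2 * (t * (y - 1)) * f t - s ^ 2 * (t * (y - 1)) * g t
            = (s ^ 2 * (t * (y - 1))) * (f t - g t) := by ring
        rw [e, abs_mul, abs_of_nonpos (mul_nonpos_of_nonneg_of_nonpos (sq_nonneg s)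
          (mul_nonpos_of_nonneg_of_nonpos ht0.le (by linarith)))]
        have hnn : (0:ℝ) ≤ s ^ 2 * (t * (1 - y)) := by
          have : (0:ℝ) ≤ 1 - y := by linarith
          positivity
        calc -(s ^ 2 * (t * (y - 1))) * |f t - g t|
            = (s ^ 2 * (t * (1 - y))) * |f t - g t| := by ring
          _ ≤ (s ^ 2 * (t * (1 - y))) * (K * N) := mul_le_mul_of_nonneg_left (hpt t htI) hnn
          _ = s ^ 2 * (K * N) * (1 - y) * t := by ring
      · exact (continuous_const.mul continuous_id).intervalIntegrable _ _
      · rw [intervalIntegral.integral_const_mul, integral_id,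
          abs_of_nonneg (by nlinarith [mul_nonneg (mul_nonneg hsKN
            (show (0:ℝ) ≤ 1 - y by linarith)) (sq_nonneg y)])]
        ring
    have hb2 : |∫ ξ in y..(1:ℝ),
        (s ^ 2 * (if ξ ≤ y then ξ * (y - 1) else y * (ξ - 1)) * f ξ
          - s ^ 2 * (if ξ ≤ y then ξ * (y - 1) else y * (ξ - 1)) * g ξ)|
        ≤ s ^ 2 * (K * N) * y * ((1 - y) ^ 2 / 2) := by
      refine (norm_int_le (g := fun t => s ^ 2 * (K * N) * y * (1 - t)) hy1 ?_ ?_).trans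
        (le_of_eq ?_)
      · intro t ht0 ht1'
        have htI : t ∈ Icc (0:ℝ) 1 := ⟨hy0.trans ht0.le, ht1'⟩
        rw [if_neg (not_le.2 ht0)]
        have e : s ^ 2 * (y * (t - 1)) * f t - s ^ 2 * (y * (t - 1)) * g t
            = (s ^ 2 * (y * (t - 1))) * (f t - g t) := by ring
        rw [e, abs_mul, abs_of_nonpos (mul_nonpos_of_nonneg_of_nonpos (sq_nonneg s)
          (mul_nonpos_of_nonneg_of_nonpos hy0 (by linarith)))]
        have hnn : (0:ℝ) ≤ s ^ 2 * (y * (1 - t)) := by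
          have : (0:ℝ) ≤ 1 - t := by linarith
          positivity
        calc -(s ^ 2 * (y * (t - 1))) * |f t - g t|
            = (s ^ 2 * (y * (1 - t))) * |f t - g t| := by ring
          _ ≤ (s ^ 2 * (y * (1 - t))) * (K * N) := mul_le_mul_of_nonneg_left (hpt t htI) hnn
          _ = s ^ 2 * (K * N) * y * (1 - t) := by ring
      · exact (continuous_const.mul (continuous_const.sub continuous_id)).intervalIntegrable _ _
      · have hi : (∫ t in y..(1:ℝ), (1 - t))
            = ((1:ℝ) - y) • (1:ℝ) - ((1:ℝ) ^ 2 - y ^ 2) / 2 := by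
          rw [intervalIntegral.integral_sub intervalIntegrable_const intervalIntegrable_id,
            integral_id, intervalIntegral.integral_const]
        rw [intervalIntegral.integral_const_mul, hi, smul_eq_mul, abs_of_nonneg
          (by nlinarith [mul_nonneg (mul_nonneg (mul_nonneg (sq_nonneg s) (mul_nonneg hK hNnn))
            hy0) (sq_nonneg (1 - y))])]
        ring
    refine ((abs_add_le _ _).trans (add_le_add hb1 hb2)).trans ?_
    nlinarith [mul_nonneg hsKN (sq_nonneg (2 * y - 1)), mul_nonneg hsKN (mul_nonneg hy0
      (mul_nonneg hy0 (by linarith : (0:ℝ) ≤ 1 - y)))]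
  -- ** Term 2 **
  have ht2 : |deriv (T ρ) y - deriv (T ϱ) y| ≤ s ^ 2 * (K * N) / 2 := by
    rw [(T_hasDerivAt s 𝔠 hcρ hTρ hy).deriv, (T_hasDerivAt s 𝔠 hcϱ hTϱ hy).deriv]
    simp only [Phi]
    set Aρ := ∫ ξ in (0:ℝ)..y, ξ * f ξ with hAρ
    set Aϱ := ∫ ξ in (0:ℝ)..y, ξ * g ξ with hAϱ
    set Bρ := ∫ ξ in y..(1:ℝ), (ξ - 1) * f ξ with hBρ
    set Bϱ := ∫ ξ in y..(1:ℝ), (ξ - 1) * g ξ with hBϱ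
    have hΔA : |Aρ - Aϱ| ≤ K * N * (y ^ 2 / 2) := by
      rw [hAρ, hAϱ, ← intervalIntegral.integral_sub
        (int_f1 hcρ (left_mem_Icc.2 zero_le_one) hy) (int_f1 hcϱ (left_mem_Icc.2 zero_le_one) hy)]
      refine (norm_int_le (g := fun t => K * N * t) hy0 ?_ ?_).trans (le_of_eq ?_)
      · intro t ht0 hty
        have htI : t ∈ Icc (0:ℝ) 1 := ⟨ht0.le, hty.trans hy1⟩
        have e : t * f t - t * g t = t * (f t - g t) := by ring
        rw [e, abs_mul, abs_of_nonneg ht0.le]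
        calc t * |f t - g t| ≤ t * (K * N) := by
              exact mul_le_mul_of_nonneg_left (hpt t htI) ht0.le
          _ = K * N * t := by ring
      · exact (continuous_const.mul continuous_id).intervalIntegrable _ _
      · rw [intervalIntegral.integral_const_mul, integral_id]
        rw [abs_of_nonneg (by nlinarith [mul_nonneg hK hNnn, sq_nonneg y])]
        ring
    have hΔB : |Bρ - Bϱ| ≤ K * N * ((1 - y) ^ 2 / 2) := by
      rw [hBρ, hBϱ, ← intervalIntegral.integral_sub
        (int_f2 hcρ hy (right_mem_Icc.2 zero_le_one)) (int_f2 hcϱ hy (right_mem_Icc.2 zero_le_one))]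
      refine (norm_int_le (g := fun t => K * N * (1 - t)) hy1 ?_ ?_).trans (le_of_eq ?_)
      · intro t ht0 ht1
        have htI : t ∈ Icc (0:ℝ) 1 := ⟨hy0.trans ht0.le, ht1⟩
        have e : (t - 1) * f t - (t - 1) * g t = (t - 1) * (f t - g t) := by ring
        rw [e, abs_mul, abs_of_nonpos (by linarith : t - 1 ≤ 0)]
        calc -(t - 1) * |f t - g t| ≤ -(t - 1) * (K * N) := by
              exact mul_le_mul_of_nonneg_left (hpt t htI) (by linarith)
          _ = K * N * (1 - t) := by ring
      · exact (continuous_const.mul (continuous_const.sub continuous_id)).intervalIntegrable _ _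
      · have hi : (∫ t in y..(1:ℝ), (1 - t))
            = ((1:ℝ) - y) • (1:ℝ) - ((1:ℝ) ^ 2 - y ^ 2) / 2 := by
          rw [intervalIntegral.integral_sub intervalIntegrable_const intervalIntegrable_id,
            integral_id, intervalIntegral.integral_const]
        rw [intervalIntegral.integral_const_mul, hi, smul_eq_mul,
          abs_of_nonneg (by nlinarith [mul_nonneg (mul_nonneg hK hNnn) (sq_nonneg (1 - y))])]
        ring
    have hrw : s ^ 2 * (Aρ + Bρ) + 𝔠 - (s ^ 2 * (Aϱ + Bϱ) + 𝔠)
        = s ^ 2 * ((Aρ - Aϱ) + (Bρ - Bϱ)) := by ring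
    rw [hrw, abs_mul, abs_of_nonneg (sq_nonneg s)]
    have habs : |Aρ - Aϱ + (Bρ - Bϱ)| ≤ K * N * (y ^ 2 / 2) + K * N * ((1 - y) ^ 2 / 2) :=
      (abs_add_le _ _).trans (add_le_add hΔA hΔB)
    have := mul_le_mul_of_nonneg_left habs (sq_nonneg s)
    nlinarith [mul_nonneg (mul_nonneg (sq_nonneg s) (mul_nonneg hK hNnn))
      (mul_nonneg hy0 (by linarith : (0:ℝ) ≤ 1 - y))]
  -- ** Term 3 **
  have ht3 : |deriv (deriv (T ρ)) y - deriv (deriv (T ϱ)) y| ≤ s ^ 2 * (K * N) := by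
    rcases eq_or_lt_of_le hy0 with h0 | h0
    · rw [← h0, T_deriv2_zero s 𝔠 hcρ hTρ, T_deriv2_zero s 𝔠 hcϱ hTϱ]
      simpa using hsKN
    rcases eq_or_lt_of_le hy1 with h1 | h1
    · rw [h1, T_deriv2_one s 𝔠 hcρ hTρ, T_deriv2_one s 𝔠 hcϱ hTϱ]
      simpa using hsKN
    · rw [T_deriv2_interior s 𝔠 hcaρ hTρ ⟨h0, h1⟩, T_deriv2_interior s 𝔠 hcaϱ hTϱ ⟨h0, h1⟩]
      rw [show s ^ 2 * f y - s ^ 2 * g y = s ^ 2 * (f y - g y) by ring, abs_mul,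
        abs_of_nonneg (sq_nonneg s)]
      exact mul_le_mul_of_nonneg_left (hpt y hy) (sq_nonneg s)
  linarith
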